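/- Let J ⊆ P = K[x_0,…,x_n] be a homogeneous ideal with P/J of positive Krull dimension, let ⪯ be a term ordering on 𝕋, and let 𝒪_{⪯,J} = 𝕋 ∖ in_⪯(J). Then 𝒪_{⪯,J} is an order ideal and there exists a unique homogeneous border basis of J on the order ideal 𝒪_{⪯,J}. -/

import Mathlib

open MvPolynomial

namespace Border

/-- A term of `K[x_0, …, x_n]`, identified with its exponent vector. -/
abbrev Term (n : ℕ) := Fin (n + 1) →₀ ℕ

variable {n : ℕ}

/-- The (standard) degree of a term. -/
def tdeg (m : Term n) : ℕ := ∑ i, m i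

/-- An order ideal: a nonempty set of terms closed under divisors. -/
def IsOrderIdeal (O : Set (Term n)) : Prop :=
  O.Nonempty ∧ ∀ τ ∈ O, ∀ τ' : Term n, τ' ≤ τ → τ' ∈ O

/-- The border `∂𝒪 = (x_0·𝒪 ∪ ⋯ ∪ x_n·𝒪) ∖ 𝒪`. -/
def border (O : Set (Term n)) : Set (Term n) :=
  {σ | σ ∉ O ∧ ∃ r : Fin (n + 1), ∃ τ ∈ O, σ = τ + Finsupp.single r 1}

/-- Multiplicative set of a border term `σ`, with respect to a labeling `lab` of the border:
`𝒯_σ = {η : σ' ∤ η·σ for every border term σ' with a larger label}`. -/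
def mulSet (O : Set (Term n)) (lab : Term n → ℕ) (σ : Term n) : Set (Term n) :=
  {η | ∀ σ' ∈ border O, lab σ < lab σ' → ¬ σ' ≤ η + σ}

/-- The cone `C(σ) = {η·σ : η ∈ 𝒯_σ}`. -/
def cone (O : Set (Term n)) (lab : Term n → ℕ) (σ : Term n) : Set (Term n) :=
  (fun η => η + σ) '' mulSet O lab σ

/-- A labeling of the border which is injective and ordered increasingly by degree. -/
def DegOrderedLabeling (O : Set (Term n)) (lab : Term n → ℕ) : Prop :=
  Set.InjOn lab (border O) ∧
    ∀ σ ∈ border O, ∀ σ' ∈ border O, lab σ < lab σ' → tdeg σ ≤ tdeg σ'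

/-- Iterated border closures: `∂⁰𝒪 := 𝒪`, and the `(k+1)`-st closure adds the border. -/
def borderClosure (O : Set (Term n)) : ℕ → Set (Term n)
  | 0 => O
  | k + 1 => borderClosure O k ∪ border (borderClosure O k)

/-- The index `ind_𝒪(τ)`: the least `k` with `τ ∈ ∂^k𝒪`. -/
noncomputable def ind (O : Set (Term n)) (τ : Term n) : ℕ :=
  sInf {k | τ ∈ borderClosure O k}

/-- Degree-`d` part of a set of terms. -/
def Od (O : Set (Term n)) (d : ℕ) : Set (Term n) := {τ | τ ∈ O ∧ tdeg τ = d}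

variable {K : Type*} [Field K]

/-- The index of a nonzero polynomial: the maximal index of a term of its support. -/
noncomputable def indP (O : Set (Term n)) (f : MvPolynomial (Fin (n + 1)) K) : ℕ :=
  f.support.sup (ind O)

/-- A homogeneous `∂𝒪`-prebasis: a family `g σ = σ - Σ_{τ ∈ 𝒪_{deg σ}} c_{στ} τ`. -/
def IsPrebasis (O : Set (Term n)) (g : Term n → MvPolynomial (Fin (n + 1)) K) : Prop :=
  ∀ σ ∈ border O, ∀ τ ∈ (monomial σ (1 : K) - g σ).support, τ ∈ O ∧ tdeg τ = tdeg σ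

/-- The set of border reductors `𝒯G = {η·g_σ : σ ∈ ∂𝒪, η ∈ 𝒯_σ}`. -/
def reductors (O : Set (Term n)) (lab : Term n → ℕ)
    (g : Term n → MvPolynomial (Fin (n + 1)) K) : Set (MvPolynomial (Fin (n + 1)) K) :=
  {p | ∃ σ ∈ border O, ∃ η ∈ mulSet O lab σ, p = monomial η (1 : K) * g σ}

/-- The degree-`d` border reductors `𝒯G_d = 𝒯G ∩ P_d`. -/
def reductorsDeg (O : Set (Term n)) (lab : Term n → ℕ)
    (g : Term n → MvPolynomial (Fin (n + 1)) K) (d : ℕ) :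
    Set (MvPolynomial (Fin (n + 1)) K) :=
  reductors O lab g ∩ {p | p.IsHomogeneous d}

/-- One step of the border reduction relation `→_G`. -/
def Step (O : Set (Term n)) (lab : Term n → ℕ)
    (g : Term n → MvPolynomial (Fin (n + 1)) K)
    (f h : MvPolynomial (Fin (n + 1)) K) : Prop :=
  ∃ σ ∈ border O, ∃ η ∈ mulSet O lab σ, η + σ ∈ f.support ∧
    h = f - f.coeff (η + σ) • (monomial η (1 : K) * g σ)

/-- The border reduction relation `→⁺_G` (finitely many, possibly zero, steps). -/
def Reduces (O : Set (Term n)) (lab : Term n → ℕ)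
    (g : Term n → MvPolynomial (Fin (n + 1)) K) :
    MvPolynomial (Fin (n + 1)) K → MvPolynomial (Fin (n + 1)) K → Prop :=
  Relation.ReflTransGen (Step O lab g)

/-- The `K`-vector space spanned by a set of terms. -/
noncomputable def spanTerms (K : Type*) [Field K] (S : Set (Term n)) :
    Submodule K (MvPolynomial (Fin (n + 1)) K) :=
  Submodule.span K ((fun τ => monomial τ (1 : K)) '' S)

/-- The ideal `(G)` generated by a `∂𝒪`-prebasis. -/
noncomputable def idealG (O : Set (Term n)) (g : Term n → MvPolynomial (Fin (n + 1)) K) :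
    Ideal (MvPolynomial (Fin (n + 1)) K) :=
  Ideal.span (g '' border O)

/-- The degree-`d` part `I_d` of an ideal, as a `K`-vector subspace. -/
noncomputable def degPart (I : Ideal (MvPolynomial (Fin (n + 1)) K)) (d : ℕ) :
    Submodule K (MvPolynomial (Fin (n + 1)) K) :=
  Submodule.restrictScalars K I ⊓ homogeneousSubmodule (Fin (n + 1)) K d

/-- Homogeneous ideal. -/
def IsHomogeneousIdeal (I : Ideal (MvPolynomial (Fin (n + 1)) K)) : Prop :=
  ∀ f ∈ I, ∀ d : ℕ, homogeneousComponent d f ∈ I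

/-- `G` is a homogeneous `∂𝒪`-basis of `J`: it is a prebasis contained in `J` and for every
`d` one has `P_d = J_d ⊕ ⟨𝒪_d⟩`, i.e. the residue classes of `𝒪_d` are a basis of `P_d/J_d`. -/
def IsBorderBasisOf (O : Set (Term n)) (g : Term n → MvPolynomial (Fin (n + 1)) K)
    (J : Ideal (MvPolynomial (Fin (n + 1)) K)) : Prop :=
  IsPrebasis O g ∧ (∀ σ ∈ border O, g σ ∈ J) ∧
    ∀ d : ℕ, degPart J d ⊔ spanTerms K (Od O d) = homogeneousSubmodule (Fin (n + 1)) K d ∧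
      Disjoint (degPart J d) (spanTerms K (Od O d))

/-- An `m`-lower representation of `f` by `𝒯G`: `f = Σ c_j • η_j·g_{σ_j}` with distinct
pairs `(η_j, σ_j)`, `η_j ∈ 𝒯_{σ_j}` and `ind(η_j σ_j) ≤ m`. -/
def HasLRep (O : Set (Term n)) (lab : Term n → ℕ)
    (g : Term n → MvPolynomial (Fin (n + 1)) K)
    (f : MvPolynomial (Fin (n + 1)) K) (m : ℕ) : Prop :=
  ∃ (s : Finset (Term n × Term n)) (c : Term n × Term n → K),
    (∀ p ∈ s, p.2 ∈ border O ∧ p.1 ∈ mulSet O lab p.2 ∧ ind O (p.1 + p.2) ≤ m) ∧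
    f = ∑ p ∈ s, c p • (monomial p.1 (1 : K) * g p.2)

/-- An `m`-lower representation of `f` by `𝒯G_d`. -/
def HasLRepDeg (O : Set (Term n)) (lab : Term n → ℕ)
    (g : Term n → MvPolynomial (Fin (n + 1)) K)
    (f : MvPolynomial (Fin (n + 1)) K) (m d : ℕ) : Prop :=
  ∃ (s : Finset (Term n × Term n)) (c : Term n × Term n → K),
    (∀ p ∈ s, p.2 ∈ border O ∧ p.1 ∈ mulSet O lab p.2 ∧ ind O (p.1 + p.2) ≤ m ∧
      (monomial p.1 (1 : K) * g p.2).IsHomogeneous d) ∧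
    f = ∑ p ∈ s, c p • (monomial p.1 (1 : K) * g p.2)

/-- The subtype of terms of `𝒪` of degree `d`. -/
abbrev OdSub (O : Set (Term n)) (d : ℕ) : Type _ := {τ : Term n // τ ∈ Od O d}

lemma tdeg_component_lt {d : ℕ} (m : Term n) (h : tdeg m = d) (i : Fin (n + 1)) :
    m i < d + 1 := by
  have : m i ≤ tdeg m :=
    Finset.single_le_sum (f := fun j => m j) (fun j _ => Nat.zero_le _) (Finset.mem_univ i)
  omega

instance (O : Set (Term n)) (d : ℕ) : Finite (OdSub O d) := by
  have hinj : Function.Injective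
      (fun τ : OdSub O d => fun i : Fin (n + 1) =>
        (⟨τ.1 i, tdeg_component_lt τ.1 τ.2.2 i⟩ : Fin (d + 1))) := by
    intro a b hab
    apply Subtype.ext
    apply Finsupp.ext
    intro i
    simpa using congrArg Fin.val (congrFun hab i)
  exact Finite.of_injective _ hinj

noncomputable instance (O : Set (Term n)) (d : ℕ) : Fintype (OdSub O d) :=
  Fintype.ofFinite _

open scoped Classical in
/-- The `r`-th `d`-graded formal multiplication matrix of a prebasis `G`,
with rows indexed by `𝒪_{d+1}` and columns by `𝒪_d`. -/
noncomputable def multMatrix (O : Set (Term n))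
    (g : Term n → MvPolynomial (Fin (n + 1)) K) (r : Fin (n + 1)) (d : ℕ) :
    Matrix (OdSub O (d + 1)) (OdSub O d) K :=
  Matrix.of fun τ' τ =>
    if τ.1 + Finsupp.single r 1 ∈ O then
      (if τ.1 + Finsupp.single r 1 = τ'.1 then 1 else 0)
    else (monomial (τ.1 + Finsupp.single r 1) (1 : K)
            - g (τ.1 + Finsupp.single r 1)).coeff τ'.1

/-- The minimum degree of a border term. -/
noncomputable def minDegBorder (O : Set (Term n)) : ℕ := sInf (tdeg '' border O)

/-- The `d`-th Macaulay transformation `a^{⟨d⟩}`, computed greedily. -/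
noncomputable def macaulay : ℕ → ℕ → ℕ
  | 0, _ => 0
  | d + 1, a =>
    if a = 0 then 0
    else
      Nat.choose (sSup {k | Nat.choose k (d + 1) ≤ a} + 1) (d + 2) +
        macaulay d (a - Nat.choose (sSup {k | Nat.choose k (d + 1) ≤ a}) (d + 1))

/-- An ideal is generated in degrees `≤ m` if it is generated by its homogeneous
elements of degree `≤ m`. -/
def GeneratedInDegLE (I : Ideal (MvPolynomial (Fin (n + 1)) K)) (m : ℕ) : Prop :=
  I = Ideal.span {f | f ∈ I ∧ ∃ d ≤ m, f.IsHomogeneous d}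

/-- The set of leading terms of nonzero elements of `J` with respect to a term ordering. -/
def leadTerms (ole : Term n → Term n → Prop)
    (J : Ideal (MvPolynomial (Fin (n + 1)) K)) : Set (Term n) :=
  {τ | ∃ f ∈ J, f ≠ 0 ∧ τ ∈ f.support ∧ ∀ τ' ∈ f.support, ole τ' τ}

/-- The complement `𝕋 ∖ in_⪯(J)` of the initial ideal: the terms divisible by no
leading term of `J`. -/
def complementInitial (ole : Term n → Term n → Prop)
    (J : Ideal (MvPolynomial (Fin (n + 1)) K)) : Set (Term n) :=
  {τ | ∀ τ' ∈ leadTerms ole J, ¬ τ' ≤ τ}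


section Helpers

variable {K : Type*} [Field K]

lemma tdeg_eq_degree (m : Term n) : tdeg m = Finsupp.degree m := by
  rw [tdeg, Finsupp.degree]
  exact (Finset.sum_subset (Finset.subset_univ _)
    (fun i _ hi => Finsupp.notMem_support_iff.mp hi)).symm

lemma tdeg_add' (a b : Term n) : tdeg (a + b) = tdeg a + tdeg b := by
  simp [tdeg, Finsupp.add_apply, Finset.sum_add_distrib]

lemma isHomogeneous_of_tdeg {p : MvPolynomial (Fin (n + 1)) K} {d : ℕ}
    (h : ∀ τ ∈ p.support, tdeg τ = d) : p.IsHomogeneous d := by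
  intro τ hτ
  have := h τ (MvPolynomial.mem_support_iff.mpr hτ)
  rwa [tdeg_eq_degree, Finsupp.degree_eq_weight_one] at this

lemma tdeg_of_mem_support {p : MvPolynomial (Fin (n + 1)) K} {d : ℕ}
    (hp : p.IsHomogeneous d) {τ : Term n} (hτ : τ ∈ p.support) : tdeg τ = d := by
  have := hp (MvPolynomial.mem_support_iff.mp hτ)
  rwa [tdeg_eq_degree, Finsupp.degree_eq_weight_one]

lemma support_subset_of_mem_spanTerms {S : Set (Term n)} {p : MvPolynomial (Fin (n + 1)) K}
    (hp : p ∈ spanTerms K S) : ∀ τ ∈ p.support, τ ∈ S := by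
  classical
  refine Submodule.span_induction (p := fun q _ => ∀ τ ∈ q.support, τ ∈ S) ?_ ?_ ?_ ?_ hp
  · rintro q ⟨τ₀, hτ₀, rfl⟩ τ hτ
    rw [MvPolynomial.support_monomial] at hτ
    simp only [one_ne_zero, if_false, Finset.mem_singleton] at hτ
    exact hτ ▸ hτ₀
  · simp
  · intro a b _ _ ha hb τ hτ
    rcases Finset.mem_union.mp (MvPolynomial.support_add hτ) with h | h
    · exact ha τ h
    · exact hb τ h
  · intro c a _ ha τ hτ
    exact ha τ (MvPolynomial.support_smul hτ)

lemma mem_spanTerms_of_support {S : Set (Term n)} {p : MvPolynomial (Fin (n + 1)) K}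
    (h : ∀ τ ∈ p.support, τ ∈ S) : p ∈ spanTerms K S := by
  rw [p.as_sum]
  refine Submodule.sum_mem _ fun τ hτ => ?_
  have : (monomial τ (p.coeff τ) : MvPolynomial (Fin (n + 1)) K)
      = (p.coeff τ) • monomial τ (1 : K) := by
    rw [MvPolynomial.smul_monomial, smul_eq_mul, mul_one]
  rw [this]
  exact Submodule.smul_mem _ _ (Submodule.subset_span ⟨τ, h τ hτ, rfl⟩)

lemma exists_ole_max {ole : Term n → Term n → Prop}
    (htotal : ∀ a b : Term n, ole a b ∨ ole b a)
    (htrans : ∀ a b c : Term n, ole a b → ole b c → ole a c) :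
    ∀ s : Finset (Term n), s.Nonempty → ∃ τ ∈ s, ∀ τ' ∈ s, ole τ' τ := by
  have hrefl : ∀ a, ole a a := fun a => (htotal a a).elim id id
  intro s
  induction s using Finset.induction_on with
  | empty => intro h; simp at h
  | @insert a s ha ih =>
    intro _
    rcases s.eq_empty_or_nonempty with rfl | hs
    · exact ⟨a, Finset.mem_insert_self a _, by
        intro τ' hτ'
        rcases Finset.mem_insert.mp hτ' with rfl | h
        · exact hrefl τ'
        · simp at h⟩
    · obtain ⟨τ, hτ, hmax⟩ := ih hs
      rcases htotal τ a with h | h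
      · exact ⟨a, Finset.mem_insert_self a _, by
          intro τ' hτ'
          rcases Finset.mem_insert.mp hτ' with rfl | h'
          · exact hrefl τ'
          · exact htrans _ _ _ (hmax τ' h') h⟩
      · exact ⟨τ, Finset.mem_insert_of_mem hτ, by
          intro τ' hτ'
          rcases Finset.mem_insert.mp hτ' with rfl | h'
          · exact h
          · exact hmax τ' h'⟩

lemma leadTerms_homog {J : Ideal (MvPolynomial (Fin (n + 1)) K)}
    (hJ : IsHomogeneousIdeal J) {ole : Term n → Term n → Prop} {τ' : Term n}
    (h : τ' ∈ leadTerms ole J) :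
    ∃ h0 : MvPolynomial (Fin (n + 1)) K, h0 ∈ J ∧ h0.IsHomogeneous (tdeg τ') ∧
      h0.coeff τ' ≠ 0 ∧ ∀ s ∈ h0.support, ole s τ' := by
  obtain ⟨f, hfJ, hfne, hτ's, hmax⟩ := h
  refine ⟨homogeneousComponent (tdeg τ') f, hJ f hfJ _, homogeneousComponent_isHomogeneous _ _, ?_, ?_⟩
  · rw [coeff_homogeneousComponent, ← tdeg_eq_degree, if_pos rfl]
    exact MvPolynomial.mem_support_iff.mp hτ's
  · intro s hs
    have hcs := MvPolynomial.mem_support_iff.mp hs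
    rw [coeff_homogeneousComponent] at hcs
    by_cases hd : Finsupp.degree s = tdeg τ'
    · rw [if_pos hd] at hcs
      exact hmax s (MvPolynomial.mem_support_iff.mpr hcs)
    · rw [if_neg hd] at hcs; exact absurd rfl hcs

lemma mem_sup_of_isHomogeneous
    (J : Ideal (MvPolynomial (Fin (n + 1)) K)) (hJ : IsHomogeneousIdeal J)
    (ole : Term n → Term n → Prop)
    (htotal : ∀ a b : Term n, ole a b ∨ ole b a)
    (hantisymm : ∀ a b : Term n, ole a b → ole b a → a = b)
    (htrans : ∀ a b c : Term n, ole a b → ole b c → ole a c)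
    (hadd : ∀ a b c : Term n, ole a b → ole (a + c) (b + c))
    (d : ℕ) (f : MvPolynomial (Fin (n + 1)) K) (hf : f.IsHomogeneous d) :
    f ∈ degPart J d ⊔ spanTerms K (Od (complementInitial ole J) d) := by
  classical
  set O := complementInitial ole J with hOdef
  have hrefl : ∀ a, ole a a := fun a => (htotal a a).elim id id
  let D : MvPolynomial (Fin (n + 1)) K → Finset (OdSub (Set.univ : Set (Term n)) d) :=
    fun q => Finset.univ.filter (fun s => s.1 ∉ O ∧ ∃ τ ∈ q.support, τ ∉ O ∧ ole s.1 τ)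
  suffices H : ∀ k : ℕ, ∀ f : MvPolynomial (Fin (n + 1)) K, f.IsHomogeneous d →
      (D f).card ≤ k → f ∈ degPart J d ⊔ spanTerms K (Od O d) from H _ f hf le_rfl
  intro k
  induction k with
  | zero =>
    intro f hf hcard
    by_cases hB : ∀ τ ∈ f.support, τ ∈ O
    · exact Submodule.mem_sup_right (mem_spanTerms_of_support
        (fun τ hτ => ⟨hB τ hτ, tdeg_of_mem_support hf hτ⟩))
    · push_neg at hB
      obtain ⟨τ, hτs, hτO⟩ := hB
      have hdτ : tdeg τ = d := tdeg_of_mem_support hf hτs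
      have : (⟨τ, ⟨Set.mem_univ τ, hdτ⟩⟩ : OdSub (Set.univ : Set (Term n)) d) ∈ D f :=
        Finset.mem_filter.mpr ⟨Finset.mem_univ _, hτO, τ, hτs, hτO, hrefl τ⟩
      have := Finset.card_pos.mpr ⟨_, this⟩
      omega
  | succ k ih =>
    intro f hf hcard
    by_cases hB : ∀ τ ∈ f.support, τ ∈ O
    · exact Submodule.mem_sup_right (mem_spanTerms_of_support
        (fun τ hτ => ⟨hB τ hτ, tdeg_of_mem_support hf hτ⟩))
    push_neg at hB
    set B := f.support.filter (fun τ => τ ∉ O) with hBdef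
    have hBne : B.Nonempty := by
      obtain ⟨τ, h1, h2⟩ := hB
      exact ⟨τ, Finset.mem_filter.mpr ⟨h1, h2⟩⟩
    obtain ⟨τ, hτB, hτmax⟩ := exists_ole_max htotal htrans B hBne
    have hτs : τ ∈ f.support := (Finset.mem_filter.mp hτB).1
    have hτO : τ ∉ O := (Finset.mem_filter.mp hτB).2
    have hdτ : tdeg τ = d := tdeg_of_mem_support hf hτs
    have hdiv : ¬ ∀ τ' ∈ leadTerms ole J, ¬ τ' ≤ τ := hτO
    push_neg at hdiv
    obtain ⟨τ', hτ'lead, hτ'le⟩ := hdiv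
    obtain ⟨h0, hh0J, hh0hom, hh0c, hh0max⟩ := leadTerms_homog hJ hτ'lead
    set η := τ - τ' with hηdef
    have hητ : η + τ' = τ := tsub_add_cancel_of_le hτ'le
    set c := f.coeff τ / h0.coeff τ' with hcdef
    set h2 := (monomial η c : MvPolynomial (Fin (n + 1)) K) * h0 with hh2def
    have hh2J : h2 ∈ J := Ideal.mul_mem_left _ _ hh0J
    have hdd : tdeg η + tdeg τ' = d := by rw [← tdeg_add', hητ, hdτ]
    have hh2hom : h2.IsHomogeneous d := by
      have h1 : (monomial η c : MvPolynomial (Fin (n + 1)) K).IsHomogeneous (tdeg η) :=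
        isHomogeneous_monomial _ (tdeg_eq_degree η).symm
      have := h1.mul hh0hom
      rwa [hdd] at this
    have hcoefft : h2.coeff τ = f.coeff τ := by
      rw [hh2def, ← hητ, MvPolynomial.coeff_monomial_mul, hcdef, div_mul_cancel₀ _ hh0c, hητ]
    have hsup2 : ∀ s ∈ h2.support, ∃ u ∈ h0.support, s = η + u := by
      intro s hs
      have hmem := MvPolynomial.support_mul _ _ hs
      rw [Finset.mem_add] at hmem
      obtain ⟨a, ha, b, hb, rfl⟩ := hmem
      rw [MvPolynomial.support_monomial] at ha
      by_cases hc0 : c = 0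
      · rw [if_pos hc0] at ha; simp at ha
      · rw [if_neg hc0] at ha
        rw [Finset.mem_singleton] at ha
        exact ⟨b, hb, by rw [ha]⟩
    set f' := f - h2 with hf'def
    have hf' : f'.IsHomogeneous d := hf.sub hh2hom
    have hτf' : f'.coeff τ = 0 := by
      rw [hf'def, MvPolynomial.coeff_sub, hcoefft, sub_self]
    have hkey : ∀ s ∈ f'.support, s ∉ O → ole s τ ∧ s ≠ τ := by
      intro s hs hsO
      have hsne : s ≠ τ := by
        rintro rfl
        exact (MvPolynomial.mem_support_iff.mp hs) hτf'
      refine ⟨?_, hsne⟩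
      have hsub := MvPolynomial.support_sub _ f h2 hs
      rcases Finset.mem_union.mp hsub with h | h
      · exact hτmax s (Finset.mem_filter.mpr ⟨h, hsO⟩)
      · obtain ⟨u, hu, rfl⟩ := hsup2 s h
        have h1 : ole u τ' := hh0max u hu
        have h3 := hadd u τ' η h1
        rw [add_comm u η, add_comm τ' η] at h3
        rwa [hητ] at h3
    have hDss : D f' ⊂ D f := by
      constructor
      · intro s hs
        simp only [D, Finset.mem_filter] at hs ⊢
        obtain ⟨_, hsO, τ₂, hτ₂, hτ₂O, hole⟩ := hs
        exact ⟨Finset.mem_univ _, hsO, τ, hτs, hτO,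
          htrans _ _ _ hole (hkey τ₂ hτ₂ hτ₂O).1⟩
      · intro hsub
        have hmem : (⟨τ, ⟨Set.mem_univ τ, hdτ⟩⟩ : OdSub (Set.univ : Set (Term n)) d) ∈ D f :=
          Finset.mem_filter.mpr ⟨Finset.mem_univ _, hτO, τ, hτs, hτO, hrefl τ⟩
        have hmem' := hsub hmem
        simp only [D, Finset.mem_filter] at hmem'
        obtain ⟨_, _, τ₂, hτ₂, hτ₂O, hole⟩ := hmem'
        obtain ⟨h1, h2'⟩ := hkey τ₂ hτ₂ hτ₂O
        exact h2' (hantisymm _ _ h1 hole)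
    have hcard' : (D f').card ≤ k := by
      have := Finset.card_lt_card hDss
      omega
    have hf'mem := ih f' hf' hcard'
    have hh2mem : h2 ∈ degPart J d ⊔ spanTerms K (Od O d) :=
      Submodule.mem_sup_left (Submodule.mem_inf.mpr ⟨hh2J, hh2hom⟩)
    have hfeq : f = f' + h2 := by rw [hf'def]; ring
    rw [hfeq]
    exact Submodule.add_mem _ hf'mem hh2mem

end Helpers

/-- **Border bases from Gröbner bases.** Let `J` be a homogeneous ideal with `P/J` of
positive Krull dimension and `⪯` a term ordering. Then `𝒪_{⪯,J} = 𝕋 ∖ in_⪯(J)` is an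
order ideal and `J` has a unique homogeneous border basis on it. -/
theorem borderBasis_of_termOrder
    (J : Ideal (MvPolynomial (Fin (n + 1)) K)) (hJ : IsHomogeneousIdeal J)
    (hdim : 0 < ringKrullDim (MvPolynomial (Fin (n + 1)) K ⧸ J))
    (ole : Term n → Term n → Prop)
    (htotal : ∀ a b : Term n, ole a b ∨ ole b a)
    (hantisymm : ∀ a b : Term n, ole a b → ole b a → a = b)
    (htrans : ∀ a b c : Term n, ole a b → ole b c → ole a c)
    (hadd : ∀ a b c : Term n, ole a b → ole (a + c) (b + c))
    (hmin : ∀ a : Term n, ole 0 a) :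
    IsOrderIdeal (complementInitial ole J) ∧
    ∃ g : Term n → MvPolynomial (Fin (n + 1)) K,
      IsBorderBasisOf (complementInitial ole J) g J ∧
      ∀ g' : Term n → MvPolynomial (Fin (n + 1)) K,
        IsBorderBasisOf (complementInitial ole J) g' J →
          ∀ σ ∈ border (complementInitial ole J), g' σ = g σ := by
  classical
  set O := complementInitial ole J with hOdef
  have hrefl : ∀ a, ole a a := fun a => (htotal a a).elim id id
  have hJtop : J ≠ ⊤ := by
    intro h
    have hsub : Subsingleton (MvPolynomial (Fin (n + 1)) K ⧸ J) :=
      Ideal.Quotient.subsingleton_iff.mpr h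
    rw [ringKrullDim_eq_bot_of_subsingleton] at hdim
    exact not_lt_bot hdim
  -- O is an order ideal
  have hOI : IsOrderIdeal O := by
    constructor
    · refine ⟨0, ?_⟩
      intro τ' hτ' hle
      have hτ'0 : τ' = 0 := nonpos_iff_eq_zero.mp hle
      subst hτ'0
      obtain ⟨f, hfJ, hfne, h0supp, hmax⟩ := hτ'
      have hsupp : ∀ s ∈ f.support, s = (0 : Term n) :=
        fun s hs => hantisymm _ _ (hmax s hs) (hmin s)
      have hc0 : f.coeff 0 ≠ 0 := MvPolynomial.mem_support_iff.mp h0supp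
      have hfC : f = C (f.coeff 0) := by
        ext m
        rw [MvPolynomial.coeff_C]
        by_cases hm : m = 0
        · subst hm; simp
        · rw [if_neg (fun h => hm h.symm)]
          by_contra hne
          exact hm (hsupp m (MvPolynomial.mem_support_iff.mpr hne))
      have hunit : IsUnit f := by
        rw [hfC]
        exact (isUnit_iff_ne_zero.mpr hc0).map MvPolynomial.C
      exact hJtop (J.eq_top_of_isUnit_mem hfJ hunit)
    · intro τ hτ τ'' hle σ hσ hστ''
      exact hτ σ hσ (le_trans hστ'' hle)
  -- degreewise decomposition
  have hsup : ∀ d, degPart J d ⊔ spanTerms K (Od O d)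
      = homogeneousSubmodule (Fin (n + 1)) K d := by
    intro d
    apply le_antisymm
    · apply sup_le inf_le_right
      rw [spanTerms, Submodule.span_le]
      rintro p ⟨τ, hτ, rfl⟩
      exact mem_homogeneousSubmodule _ _ |>.mpr
        (isHomogeneous_monomial _ (by rw [← tdeg_eq_degree]; exact hτ.2))
    · intro f hf
      exact mem_sup_of_isHomogeneous J hJ ole htotal hantisymm htrans hadd d f
        ((mem_homogeneousSubmodule _ _).mp hf)
  have hdisj : ∀ d, Disjoint (degPart J d) (spanTerms K (Od O d)) := by
    intro d
    rw [Submodule.disjoint_def]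
    intro f hf1 hf2
    by_contra hne
    obtain ⟨τ, hτs, hτmax⟩ := exists_ole_max htotal htrans f.support
      (MvPolynomial.support_nonempty.mpr hne)
    have hτO : τ ∈ O := (support_subset_of_mem_spanTerms hf2 τ hτs).1
    exact hτO τ ⟨f, (Submodule.mem_inf.mp hf1).1, hne, hτs, hτmax⟩ le_rfl
  -- construct g
  have hexists : ∀ σ, σ ∈ border O →
      ∃ b, b ∈ spanTerms K (Od O (tdeg σ)) ∧ monomial σ (1 : K) - b ∈ J := by
    intro σ hσ
    have hm : (monomial σ (1 : K)) ∈ homogeneousSubmodule (Fin (n + 1)) K (tdeg σ) :=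
      (mem_homogeneousSubmodule _ _).mpr (isHomogeneous_monomial _ (tdeg_eq_degree σ).symm)
    rw [← hsup (tdeg σ)] at hm
    obtain ⟨a, ha, b, hb, hab⟩ := Submodule.mem_sup.mp hm
    refine ⟨b, hb, ?_⟩
    have : monomial σ (1 : K) - b = a := by rw [← hab]; ring
    rw [this]
    exact (Submodule.mem_inf.mp ha).1
  choose bfun hbspan hbJ using hexists
  set g : Term n → MvPolynomial (Fin (n + 1)) K :=
    fun σ => if h : σ ∈ border O then monomial σ (1 : K) - bfun σ h else 0 with hgdef
  have hgpre : IsPrebasis O g := by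
    intro σ hσ τ hτ
    rw [hgdef] at hτ
    simp only [dif_pos hσ, sub_sub_cancel] at hτ
    exact support_subset_of_mem_spanTerms (hbspan σ hσ) τ hτ
  have hgJ : ∀ σ ∈ border O, g σ ∈ J := by
    intro σ hσ
    rw [hgdef]
    simp only [dif_pos hσ]
    exact hbJ σ hσ
  refine ⟨hOI, g, ⟨hgpre, hgJ, fun d => ⟨hsup d, hdisj d⟩⟩, ?_⟩
  intro g' hg' σ hσ
  obtain ⟨hg'pre, hg'J, _⟩ := hg'
  have hdiff : g' σ - g σ ∈ J := Submodule.sub_mem _ (hg'J σ hσ) (hgJ σ hσ)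
  have heq : g' σ - g σ
      = (monomial σ (1 : K) - g σ) - (monomial σ (1 : K) - g' σ) := by ring
  have hsupport : ∀ τ ∈ (g' σ - g σ).support, τ ∈ O ∧ tdeg τ = tdeg σ := by
    intro τ hτ
    rw [heq] at hτ
    rcases Finset.mem_union.mp (MvPolynomial.support_sub _ _ _ hτ) with h | h
    · exact hgpre σ hσ τ h
    · exact hg'pre σ hσ τ h
  have hhom : (g' σ - g σ).IsHomogeneous (tdeg σ) :=
    isHomogeneous_of_tdeg (fun τ hτ => (hsupport τ hτ).2)
  have hspan : g' σ - g σ ∈ spanTerms K (Od O (tdeg σ)) :=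
    mem_spanTerms_of_support (fun τ hτ => hsupport τ hτ)
  have hzero : g' σ - g σ = 0 :=
    Submodule.disjoint_def.mp (hdisj (tdeg σ)) _
      (Submodule.mem_inf.mpr ⟨hdiff, hhom⟩) hspan
  exact sub_eq_zero.mp hzero

end Border
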